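/- arXiv:1602.05866 — 3 statements merged into one kernel-verified Lean document; each statement's English description precedes it below -/
import Mathlib

section
/- Let V be a finite set of vectors in ℝ^ℓ and let w(s) = (1/s)·ln Σ_{v∈V} exp(s²‖v‖²/(2ℓ²)) for s > 0, where ‖·‖ is the Euclidean norm. Then w is a convex, continuous function on (0,∞). -/
private lemma radeBound_aux {ι : Type*} (V : Finset ι) (hV : V.Nonempty)
    (a : ι → ℝ) (ha0 : ∀ v, 0 ≤ a v) :
    ConvexOn ℝ (Set.Ioi (0 : ℝ))
        (fun s : ℝ => s⁻¹ * Real.log (∑ v ∈ V, Real.exp (s ^ 2 * a v))) ∧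
      ContinuousOn
        (fun s : ℝ => s⁻¹ * Real.log (∑ v ∈ V, Real.exp (s ^ 2 * a v)))
        (Set.Ioi (0 : ℝ)) := by
  set f : ℝ → ℝ := fun s => s⁻¹ * Real.log (∑ v ∈ V, Real.exp (s ^ 2 * a v)) with hf
  have hgpos : ∀ s : ℝ, 0 < ∑ v ∈ V, Real.exp (s ^ 2 * a v) := fun s =>
    Finset.sum_pos (fun v _ => Real.exp_pos _) hV
  -- key: at each s0 > 0 there is a convex minorant s*A + H/s touching f at s0
  have key : ∀ s0 : ℝ, 0 < s0 → ∃ A H : ℝ, 0 ≤ A ∧ 0 ≤ H ∧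
      (∀ s : ℝ, 0 < s → s * A + H / s ≤ f s) ∧ f s0 = s0 * A + H / s0 := by
    intro s0 hs0
    set Z := ∑ v ∈ V, Real.exp (s0 ^ 2 * a v) with hZ
    have hZpos : 0 < Z := hgpos s0
    set p : ι → ℝ := fun v => Real.exp (s0 ^ 2 * a v) / Z with hp
    have hppos : ∀ v, 0 < p v := fun v => div_pos (Real.exp_pos _) hZpos
    have hpsum : ∑ v ∈ V, p v = 1 := by
      rw [hp]
      rw [← Finset.sum_div]
      exact div_self hZpos.ne'
    set A := ∑ v ∈ V, p v * a v with hA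
    have hA0 : 0 ≤ A := Finset.sum_nonneg fun v _ => mul_nonneg (hppos v).le (ha0 v)
    set H := Real.log Z - s0 ^ 2 * A with hH
    have hH0 : 0 ≤ H := by
      have hrw : ∑ v ∈ V, p v * (Real.log Z - s0 ^ 2 * a v)
          = (∑ v ∈ V, p v) * Real.log Z - s0 ^ 2 * ∑ v ∈ V, p v * a v := by
        rw [Finset.sum_mul, Finset.mul_sum, ← Finset.sum_sub_distrib]
        exact Finset.sum_congr rfl fun v _ => by ring
      have hnn : 0 ≤ ∑ v ∈ V, p v * (Real.log Z - s0 ^ 2 * a v) := by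
        refine Finset.sum_nonneg fun v hv => mul_nonneg (hppos v).le ?_
        have hle : Real.exp (s0 ^ 2 * a v) ≤ Z :=
          Finset.single_le_sum (fun w _ => (Real.exp_pos (s0 ^ 2 * a w)).le) hv
        have h := Real.log_le_log (Real.exp_pos _) hle
        rw [Real.log_exp] at h
        linarith
      rw [hrw, hpsum, one_mul, ← hA] at hnn
      rw [hH]
      linarith
    refine ⟨A, H, hA0, hH0, ?_, ?_⟩
    · intro s hs
      -- main inequality: log(∑ exp(s² a v)) ≥ log Z + (s² - s0²) A
      set t := s ^ 2 - s0 ^ 2 with hT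
      have hterm : ∀ v ∈ V, Z * (p v * (Real.exp (t * A) * (t * a v - t * A + 1)))
          ≤ Real.exp (s ^ 2 * a v) := by
        intro v _
        have h1 : Real.exp (s ^ 2 * a v)
            = Real.exp (s0 ^ 2 * a v) * (Real.exp (t * A) * Real.exp (t * a v - t * A)) := by
          rw [← Real.exp_add, ← Real.exp_add]
          congr 1
          rw [hT]; ring
        have h2 : t * a v - t * A + 1 ≤ Real.exp (t * a v - t * A) :=
          Real.add_one_le_exp _
        have h3 : Z * p v = Real.exp (s0 ^ 2 * a v) := by
          rw [hp]
          field_simp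
        calc Z * (p v * (Real.exp (t * A) * (t * a v - t * A + 1)))
            = (Z * p v) * (Real.exp (t * A) * (t * a v - t * A + 1)) := by ring
          _ ≤ (Z * p v) * (Real.exp (t * A) * Real.exp (t * a v - t * A)) := by
              refine mul_le_mul_of_nonneg_left ?_ ?_
              · exact mul_le_mul_of_nonneg_left h2 (Real.exp_pos _).le
              · rw [h3]; exact (Real.exp_pos _).le
          _ = Real.exp (s ^ 2 * a v) := by rw [h3, ← h1]
      have hsum : Z * Real.exp (t * A) ≤ ∑ v ∈ V, Real.exp (s ^ 2 * a v) := by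
        have hs1 := Finset.sum_le_sum hterm
        rw [← Finset.mul_sum] at hs1
        have hinner : ∑ v ∈ V, p v * (Real.exp (t * A) * (t * a v - t * A + 1))
            = Real.exp (t * A) := by
          have e1 : ∀ v, p v * (Real.exp (t * A) * (t * a v - t * A + 1))
              = Real.exp (t * A) * (t * (p v * a v)) + (Real.exp (t * A) * (1 - t * A)) * p v := by
            intro v; ring
          simp_rw [e1]
          rw [Finset.sum_add_distrib, ← Finset.mul_sum, ← Finset.mul_sum, ← Finset.mul_sum,
            ← hA, hpsum]
          ring
        rw [hinner] at hs1
        exact hs1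
      have hlog : Real.log Z + t * A ≤ Real.log (∑ v ∈ V, Real.exp (s ^ 2 * a v)) := by
        have h := Real.log_le_log (mul_pos hZpos (Real.exp_pos _)) hsum
        rwa [Real.log_mul hZpos.ne' (Real.exp_pos _).ne', Real.log_exp] at h
      have hmain : s ^ 2 * A + H ≤ Real.log (∑ v ∈ V, Real.exp (s ^ 2 * a v)) := by
        have hLZ : Real.log Z = H + s0 ^ 2 * A := by rw [hH]; ring
        rw [hLZ, hT] at hlog
        linarith
      have hmul := mul_le_mul_of_nonneg_left hmain (by positivity : (0:ℝ) ≤ s⁻¹)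
      calc s * A + H / s = s⁻¹ * (s ^ 2 * A + H) := by
            field_simp
        _ ≤ f s := hmul
    · rw [hf]
      have hLZ : Real.log Z = s0 ^ 2 * A + H := by rw [hH]; ring
      simp only
      rw [← hZ, hLZ]
      field_simp
  constructor
  · refine ⟨convex_Ioi 0, fun x hx y hy c d hc hd hcd => ?_⟩
    have hx' : (0:ℝ) < x := hx
    have hy' : (0:ℝ) < y := hy
    have hs0 : (0:ℝ) < c * x + d * y := by
      have h := (convex_Ioi (0:ℝ)) hx hy hc hd hcd
      simpa using h
    obtain ⟨A, H, hA0, hH0, hle, heq⟩ := key (c * x + d * y) hs0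
    have h1 := hle x hx'
    have h2 := hle y hy'
    have hinv : 1 / (c * x + d * y) ≤ (c * y + d * x) / (x * y) := by
      rw [div_le_div_iff₀ hs0 (mul_pos hx' hy')]
      have hd' : d = 1 - c := by linarith
      subst hd'
      nlinarith [mul_nonneg (mul_nonneg hc hd) (sq_nonneg (x - y))]
    have hHdiv : H / (c * x + d * y) ≤ c * (H / x) + d * (H / y) := by
      have h3 : H / (c * x + d * y) ≤ H * ((c * y + d * x) / (x * y)) := by
        rw [div_eq_mul_one_div]
        exact mul_le_mul_of_nonneg_left hinv hH0
      have h4 : H * ((c * y + d * x) / (x * y)) = c * (H / x) + d * (H / y) := by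
        field_simp
      rw [h4] at h3
      exact h3
    simp only [smul_eq_mul]
    calc f (c * x + d * y) = (c * x + d * y) * A + H / (c * x + d * y) := heq
      _ ≤ c * (x * A + H / x) + d * (y * A + H / y) := by
          nlinarith [hHdiv]
      _ ≤ c * f x + d * f y :=
          add_le_add (mul_le_mul_of_nonneg_left h1 hc) (mul_le_mul_of_nonneg_left h2 hd)
  · have hcont : Continuous fun s : ℝ => Real.log (∑ v ∈ V, Real.exp (s ^ 2 * a v)) := by
      refine Continuous.log ?_ fun s => (hgpos s).ne'
      exact continuous_finset_sum _ fun v _ =>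
        Real.continuous_exp.comp ((continuous_pow 2).mul continuous_const)
    refine ContinuousOn.mul ?_ hcont.continuousOn
    exact ContinuousOn.inv₀ continuousOn_id fun x hx => ne_of_gt hx

/-- The function w(s) = (1/s)·ln Σ_{v∈V} exp(s²‖v‖²/(2ℓ²)) is convex and continuous
on the positive reals. -/
theorem convexOn_continuousOn_radeBound (ℓ : ℕ) (hℓ : 1 ≤ ℓ)
    (V : Finset (EuclideanSpace ℝ (Fin ℓ))) (hV : V.Nonempty) :
    ConvexOn ℝ (Set.Ioi (0 : ℝ))
        (fun s : ℝ => s⁻¹ *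
          Real.log (∑ v ∈ V, Real.exp (s ^ 2 * ‖v‖ ^ 2 / (2 * (ℓ : ℝ) ^ 2)))) ∧
      ContinuousOn
        (fun s : ℝ => s⁻¹ *
          Real.log (∑ v ∈ V, Real.exp (s ^ 2 * ‖v‖ ^ 2 / (2 * (ℓ : ℝ) ^ 2))))
        (Set.Ioi (0 : ℝ)) := by
  have h := radeBound_aux V hV (fun v => ‖v‖ ^ 2 / (2 * (ℓ : ℝ) ^ 2))
    (fun v => by positivity)
  simpa only [mul_div_assoc] using h
end

section
/- There is no undirected graph G=(V,E) in which the rangeset F⁺ (subgraphs of the betweenness functions f_w(u,v)=σ_{uv}(w)/σ_{uv}) shatters a set B = {((u_i,v_i), x_i) : 1 ≤ i ≤ 4} ⊆ D×[0,1] when at least three of the four pairs (u_i,v_i) satisfy σ_{u_i v_i} = 1 (a unique shortest path) and the remaining pair satisfies σ_{u_i v_i} ≤ 2. -/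
/-- Number of shortest paths from `u` to `v` in `G`. -/
noncomputable def sigmaSP {V : Type*} (G : SimpleGraph V) (u v : V) : ℕ :=
  Nat.card {p : G.Walk u v // p.IsPath ∧ p.length = G.dist u v}

/-- Number of shortest paths from `u` to `v` having `w` as an internal vertex. -/
noncomputable def sigmaSPThrough {V : Type*} (G : SimpleGraph V) (u v w : V) : ℕ :=
  Nat.card {p : G.Walk u v //
    p.IsPath ∧ p.length = G.dist u v ∧ w ∈ p.support ∧ w ≠ u ∧ w ≠ v}

/-- The function f_w(u,v) = σ_{uv}(w)/σ_{uv}; equals 0 when σ_{uv} = 0. -/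
noncomputable def bcFrac {V : Type*} (G : SimpleGraph V) (u v w : V) : ℝ :=
  (sigmaSPThrough G u v w : ℝ) / (sigmaSP G u v : ℝ)

/-- `B ⊆ D×[0,1]` is shattered by the rangeset `F⁺ = {R_{f_w} : w ∈ V}`, where
`R_{f_w} = {((u,v),t) : t ≤ f_w(u,v)}`. -/
def ShattersBC {V : Type*} (G : SimpleGraph V) (B : Set ((V × V) × ℝ)) : Prop :=
  ∀ C ⊆ B, ∃ w : V, {p ∈ B | p.2 ≤ bcFrac G p.1.1 p.1.2 w} = C

namespace NoShatterAux

set_option linter.unusedSectionVars false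

open SimpleGraph

variable {V : Type*} [Fintype V] {G : SimpleGraph V}

lemma finite_len (s t : V) : Finite {p : G.Walk s t // p.length = G.dist s t} := by
  classical
  letI : DecidableRel G.Adj := fun a b => Classical.propDecidable _
  infer_instance

instance finite_SP (s t : V) :
    Finite {p : G.Walk s t // p.IsPath ∧ p.length = G.dist s t} := by
  have := finite_len (G := G) s t
  exact Finite.of_injective
    (fun p => (⟨p.1, p.2.2⟩ : {p : G.Walk s t // p.length = G.dist s t}))
    (fun p q h => by
      simp only [Subtype.mk.injEq] at h
      exact Subtype.ext h)

instance finite_SPT (s t w : V) :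
    Finite {p : G.Walk s t //
      p.IsPath ∧ p.length = G.dist s t ∧ w ∈ p.support ∧ w ≠ s ∧ w ≠ t} := by
  have := finite_len (G := G) s t
  exact Finite.of_injective
    (fun p => (⟨p.1, p.2.2.1⟩ : {p : G.Walk s t // p.length = G.dist s t}))
    (fun p q h => by
      simp only [Subtype.mk.injEq] at h
      exact Subtype.ext h)

lemma exists_of_sigT {s t w : V} (h : 1 ≤ sigmaSPThrough G s t w) :
    ∃ R : G.Walk s t, R.IsPath ∧ R.length = G.dist s t ∧
      w ∈ R.support ∧ w ≠ s ∧ w ≠ t := by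
  unfold sigmaSPThrough at h
  have h0 := Nat.one_le_iff_ne_zero.mp h
  obtain ⟨⟨R, h1, h2, h3, h4, h5⟩⟩ := (Nat.card_ne_zero.mp h0).1
  exact ⟨R, h1, h2, h3, h4, h5⟩

lemma sigT_le_sigma {s t w : V} : sigmaSPThrough G s t w ≤ sigmaSP G s t := by
  unfold sigmaSP sigmaSPThrough
  exact Nat.card_le_card_of_injective
    (fun p => ⟨p.1, p.2.1, p.2.2.1⟩)
    (fun p q h => by
      simp only [Subtype.mk.injEq] at h
      exact Subtype.ext h)

lemma bc_nonneg {s t w : V} : 0 ≤ bcFrac G s t w :=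
  div_nonneg (Nat.cast_nonneg _) (Nat.cast_nonneg _)

lemma mem_imp {s t w : V} {x : ℝ} (hx : 0 < x) (h : x ≤ bcFrac G s t w) :
    1 ≤ sigmaSPThrough G s t w ∧ 1 ≤ sigmaSP G s t := by
  have h1 : sigmaSPThrough G s t w ≠ 0 := by
    intro h0
    rw [bcFrac, h0] at h
    simp at h
    linarith
  have h2 : sigmaSP G s t ≠ 0 := by
    intro h0
    rw [bcFrac, h0] at h
    simp at h
    linarith
  exact ⟨Nat.one_le_iff_ne_zero.mpr h1, Nat.one_le_iff_ne_zero.mpr h2⟩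

lemma mem_of_unique {s t w : V} {x : ℝ} (hσ : sigmaSP G s t = 1)
    (hT : 1 ≤ sigmaSPThrough G s t w) (hx1 : x ≤ 1) : x ≤ bcFrac G s t w := by
  rw [bcFrac, hσ]
  have : (1 : ℝ) ≤ (sigmaSPThrough G s t w : ℝ) := by exact_mod_cast hT
  rw [Nat.cast_one, div_one]
  linarith

lemma mem_of_two {s t w : V} {x : ℝ} (hσ2 : sigmaSP G s t ≤ 2)
    (hσ1 : 1 ≤ sigmaSP G s t) (hT : 1 ≤ sigmaSPThrough G s t w)
    (hx : x ≤ 1 / 2) : x ≤ bcFrac G s t w := by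
  rw [bcFrac]
  have hσpos : (0 : ℝ) < (sigmaSP G s t : ℝ) := by exact_mod_cast hσ1
  have h2 : sigmaSP G s t ≤ 2 * sigmaSPThrough G s t w := by omega
  have h2' : (sigmaSP G s t : ℝ) ≤ 2 * (sigmaSPThrough G s t w : ℝ) := by exact_mod_cast h2
  have : (1 : ℝ) / 2 ≤ (sigmaSPThrough G s t w : ℝ) / (sigmaSP G s t : ℝ) := by
    rw [div_le_div_iff₀ (by norm_num) hσpos]
    linarith
  linarith

lemma sigT_eq_of_big {s t w : V} {x : ℝ} (hσ2 : sigmaSP G s t ≤ 2)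
    (h : x ≤ bcFrac G s t w) (hx : 1 / 2 < x) :
    sigmaSPThrough G s t w = sigmaSP G s t := by
  obtain ⟨hT, hσ1⟩ := mem_imp (by linarith) h
  have hle := sigT_le_sigma (G := G) (s := s) (t := t) (w := w)
  have hσpos : (0 : ℝ) < (sigmaSP G s t : ℝ) := by exact_mod_cast hσ1
  have hgt : (sigmaSP G s t : ℝ) < 2 * (sigmaSPThrough G s t w : ℝ) := by
    rw [bcFrac] at h
    have h' : 1 / 2 < (sigmaSPThrough G s t w : ℝ) / (sigmaSP G s t : ℝ) := lt_of_lt_of_le hx h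
    rw [lt_div_iff₀ hσpos] at h'
    linarith
  have : sigmaSP G s t < 2 * sigmaSPThrough G s t w := by exact_mod_cast hgt
  omega

lemma internal_of_sigT_eq {s t w : V}
    (hEq : sigmaSPThrough G s t w = sigmaSP G s t)
    {R : G.Walk s t} (hp : R.IsPath) (hl : R.length = G.dist s t) :
    w ∈ R.support ∧ w ≠ s ∧ w ≠ t := by
  by_contra hcon
  have key : sigmaSPThrough G s t w + 1 ≤ sigmaSP G s t := by
    have hinj : Function.Injective
        (Sum.elim (fun p : {p : G.Walk s t //
            p.IsPath ∧ p.length = G.dist s t ∧ w ∈ p.support ∧ w ≠ s ∧ w ≠ t} =>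
            (⟨p.1, p.2.1, p.2.2.1⟩ : {p : G.Walk s t // p.IsPath ∧ p.length = G.dist s t}))
          (fun _ : Unit => ⟨R, hp, hl⟩)) := by
      rintro (p | p) (q | q) hfe
      · simp only [Sum.elim_inl, Subtype.mk.injEq] at hfe
        exact congrArg Sum.inl (Subtype.ext hfe)
      · exfalso
        simp only [Sum.elim_inl, Sum.elim_inr, Subtype.mk.injEq] at hfe
        apply hcon
        rw [← hfe]
        exact p.2.2.2
      · exfalso
        simp only [Sum.elim_inl, Sum.elim_inr, Subtype.mk.injEq] at hfe
        apply hcon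
        rw [hfe]
        exact q.2.2.2
      · cases p; cases q; rfl
    have hcard := Nat.card_le_card_of_injective _ hinj
    rw [Nat.card_sum] at hcard
    have h1 : Nat.card Unit = 1 := Nat.card_unique
    rw [h1] at hcard
    exact hcard
  omega

lemma unique_internal {s t : V} (hσ : sigmaSP G s t = 1) :
    ∃ R : G.Walk s t, R.IsPath ∧ R.length = G.dist s t ∧
      ∀ w, 1 ≤ sigmaSPThrough G s t w → (w ∈ R.support ∧ w ≠ s ∧ w ≠ t) := by
  unfold sigmaSP at hσ
  obtain ⟨hss, hne⟩ := Nat.card_eq_one_iff_unique.mp hσ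
  obtain ⟨⟨R, hp, hl⟩⟩ := hne
  refine ⟨R, hp, hl, fun w hw => ?_⟩
  obtain ⟨R', h1, h2, h3, h4, h5⟩ := exists_of_sigT hw
  have heq : R' = R := by
    have := @Subsingleton.elim _ hss ⟨R', h1, h2⟩ ⟨R, hp, hl⟩
    exact congrArg Subtype.val this
  rw [heq] at h3
  exact ⟨h3, h4, h5⟩

lemma reach_left {s t x : V} {R : G.Walk s t} (hx : x ∈ R.support) :
    G.Reachable s x := by
  classical
  exact ⟨R.takeUntil x hx⟩

lemma reach_right {s t x : V} {R : G.Walk s t} (hx : x ∈ R.support) :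
    G.Reachable x t := by
  classical
  exact ⟨R.dropUntil x hx⟩

lemma dist_tri {a b c : V} (h1 : G.Reachable a b) (h2 : G.Reachable b c) :
    G.dist a c ≤ G.dist a b + G.dist b c := by
  obtain ⟨p, hp⟩ := h1.exists_walk_length_eq_dist
  obtain ⟨q, hq⟩ := h2.exists_walk_length_eq_dist
  calc G.dist a c ≤ (p.append q).length := dist_le _
    _ = G.dist a b + G.dist b c := by rw [Walk.length_append, hp, hq]

lemma pos1 {s t x : V} {R : G.Walk s t} (hR : R.length = G.dist s t)
    (hx : x ∈ R.support) : G.dist s x + G.dist x t = G.dist s t := by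
  classical
  have h1 : G.dist s x ≤ (R.takeUntil x hx).length := dist_le _
  have h2 : G.dist x t ≤ (R.dropUntil x hx).length := dist_le _
  have h3 := congrArg Walk.length (R.take_spec hx)
  rw [Walk.length_append] at h3
  have h4 : G.dist s t ≤ G.dist s x + G.dist x t :=
    dist_tri (reach_left hx) (reach_right hx)
  omega

lemma pos2 {s t x y : V} {R : G.Walk s t} (hR : R.length = G.dist s t)
    (hx : x ∈ R.support) (hy : y ∈ R.support)
    (hle : G.dist s x ≤ G.dist s y) :
    G.dist s x + G.dist x y = G.dist s y := by
  classical
  have e1 : G.dist s x + G.dist x t = G.dist s t := pos1 hR hx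
  have e3 : G.dist s y + G.dist y t = G.dist s t := pos1 hR hy
  have h1 : G.dist s x ≤ (R.takeUntil x hx).length := dist_le _
  have h2 : G.dist x t ≤ (R.dropUntil x hx).length := dist_le _
  have h3 := congrArg Walk.length (R.take_spec hx)
  rw [Walk.length_append] at h3
  have htl : (R.takeUntil x hx).length = G.dist s x := by omega
  have hdl : (R.dropUntil x hx).length = G.dist x t := by omega
  have hy' : y ∈ (R.takeUntil x hx).support ∨ y ∈ (R.dropUntil x hx).support := by
    rw [← R.take_spec hx] at hy
    exact (Walk.mem_support_append_iff _ _).mp hy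
  rcases hy' with hy1 | hy2
  · have e4 : G.dist s y + G.dist y x = G.dist s x := pos1 htl hy1
    have h0 : G.dist y x = 0 := by omega
    have hxy : y = x := by
      have hr : G.Reachable y x := reach_right hy1
      exact hr.dist_eq_zero_iff.mp h0
    subst hxy
    simp only [SimpleGraph.dist_self]
    omega
  · have e5 : G.dist x y + G.dist y t = G.dist x t := pos1 hdl hy2
    omega

lemma cat {s t m : V} (hb : G.dist s m + G.dist m t = G.dist s t)
    (hms : m ≠ s) (hmt : m ≠ t)
    (h1 : G.Reachable s m) (h2 : G.Reachable m t) :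
    1 ≤ sigmaSPThrough G s t m := by
  obtain ⟨p, hp⟩ := h1.exists_walk_length_eq_dist
  obtain ⟨q, hq⟩ := h2.exists_walk_length_eq_dist
  have hlen : (p.append q).length = G.dist s t := by
    rw [Walk.length_append, hp, hq, hb]
  have hpath : (p.append q).IsPath := Walk.isPath_of_length_eq_dist _ hlen
  have hmem : m ∈ (p.append q).support := by
    rw [Walk.mem_support_append_iff]
    exact Or.inl (Walk.end_mem_support p)
  haveI hne : Nonempty {p' : G.Walk s t //
      p'.IsPath ∧ p'.length = G.dist s t ∧ m ∈ p'.support ∧ m ≠ s ∧ m ≠ t} :=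
    ⟨⟨p.append q, hpath, hlen, hmem, hms, hmt⟩⟩
  unfold sigmaSPThrough
  exact Nat.card_pos

lemma convp_aux {s t x y m : V} {R : G.Walk s t} (hR : R.length = G.dist s t)
    (hxm : x ∈ R.support) (hym : y ∈ R.support)
    (hxs : x ≠ s) (hxt : x ≠ t) (hys : y ≠ s) (hyt : y ≠ t)
    (hm : G.dist x m + G.dist m y = G.dist x y)
    (hr1 : G.Reachable x m) (hr2 : G.Reachable m y)
    (hle : G.dist s x ≤ G.dist s y) :
    G.dist s m + G.dist m t = G.dist s t ∧ m ≠ s ∧ m ≠ t := by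
  have e1 : G.dist s x + G.dist x t = G.dist s t := pos1 hR hxm
  have e2 : G.dist s y + G.dist y t = G.dist s t := pos1 hR hym
  have exy : G.dist s x + G.dist x y = G.dist s y := pos2 hR hxm hym hle
  have u1 : G.dist s m ≤ G.dist s x + G.dist x m := dist_tri (reach_left hxm) hr1
  have u2 : G.dist m t ≤ G.dist m y + G.dist y t := dist_tri hr2 (reach_right hym)
  have l1 : G.dist s t ≤ G.dist s m + G.dist m t :=
    dist_tri ((reach_left hxm).trans hr1) (hr2.trans (reach_right hym))
  refine ⟨by omega, ?_, ?_⟩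
  · intro hms
    rw [hms] at hm
    rw [SimpleGraph.dist_comm (G := G) (u := x) (v := s)] at hm
    have hx0 : G.dist s x = 0 := by omega
    exact hxs ((reach_left hxm).dist_eq_zero_iff.mp hx0).symm
  · intro hmt
    rw [hmt] at hm
    rw [SimpleGraph.dist_comm (G := G) (u := t) (v := y)] at hm
    have hy0 : G.dist y t = 0 := by omega
    exact hyt ((reach_right hym).dist_eq_zero_iff.mp hy0)

lemma convp {s t x y m : V} {R : G.Walk s t} (hR : R.length = G.dist s t)
    (hxm : x ∈ R.support) (hym : y ∈ R.support)
    (hxs : x ≠ s) (hxt : x ≠ t) (hys : y ≠ s) (hyt : y ≠ t)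
    (hm : G.dist x m + G.dist m y = G.dist x y)
    (hr1 : G.Reachable x m) (hr2 : G.Reachable m y) :
    G.dist s m + G.dist m t = G.dist s t ∧ m ≠ s ∧ m ≠ t := by
  rcases le_total (G.dist s x) (G.dist s y) with h | h
  · exact convp_aux hR hxm hym hxs hxt hys hyt hm hr1 hr2 h
  · have hm' : G.dist y m + G.dist m x = G.dist y x := by
      have c1 := SimpleGraph.dist_comm (G := G) (u := y) (v := m)
      have c2 := SimpleGraph.dist_comm (G := G) (u := m) (v := x)
      have c3 := SimpleGraph.dist_comm (G := G) (u := y) (v := x)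
      omega
    exact convp_aux hR hym hxm hys hyt hxs hxt hm' hr2.symm hr1.symm h

lemma middle_case {s0 t0 s t o1 o2 m : V} {R0 : G.Walk s0 t0} {R : G.Walk s t}
    (hR : R.length = G.dist s t)
    (h1 : o1 ∈ R0.support) (hmm : m ∈ R0.support) (h2 : o2 ∈ R0.support)
    (hbtw : G.dist o1 m + G.dist m o2 = G.dist o1 o2)
    (ho1 : o1 ∈ R.support ∧ o1 ≠ s ∧ o1 ≠ t)
    (ho2 : o2 ∈ R.support ∧ o2 ≠ s ∧ o2 ≠ t) :
    1 ≤ sigmaSPThrough G s t m := by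
  have hr1 : G.Reachable o1 m := (reach_left h1).symm.trans (reach_left hmm)
  have hr2 : G.Reachable m o2 := (reach_left hmm).symm.trans (reach_left h2)
  obtain ⟨hd, hms, hmt⟩ :=
    convp hR ho1.1 ho2.1 ho1.2.1 ho1.2.2 ho2.2.1 ho2.2.2 hbtw hr1 hr2
  exact cat hd hms hmt ((reach_left ho1.1).trans hr1) (hr2.trans (reach_right ho2.1))

lemma mid_of_le {s t z1 z2 z3 : V} {R : G.Walk s t} (hR : R.length = G.dist s t)
    (h1 : z1 ∈ R.support) (h2 : z2 ∈ R.support) (h3 : z3 ∈ R.support)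
    (ha : G.dist s z1 ≤ G.dist s z2) (hb : G.dist s z2 ≤ G.dist s z3) :
    G.dist z1 z2 + G.dist z2 z3 = G.dist z1 z3 := by
  have p12 := pos2 hR h1 h2 ha
  have p23 := pos2 hR h2 h3 hb
  have p13 := pos2 hR h1 h3 (ha.trans hb)
  omega

lemma ex_mid {s t z1 z2 z3 : V} {R : G.Walk s t} (hR : R.length = G.dist s t)
    (h1 : z1 ∈ R.support) (h2 : z2 ∈ R.support) (h3 : z3 ∈ R.support) :
    (G.dist z1 z2 + G.dist z2 z3 = G.dist z1 z3) ∨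
    (G.dist z2 z1 + G.dist z1 z3 = G.dist z2 z3) ∨
    (G.dist z1 z3 + G.dist z3 z2 = G.dist z1 z2) := by
  have c12 := SimpleGraph.dist_comm (G := G) (u := z1) (v := z2)
  have c13 := SimpleGraph.dist_comm (G := G) (u := z1) (v := z3)
  have c23 := SimpleGraph.dist_comm (G := G) (u := z2) (v := z3)
  rcases le_total (G.dist s z1) (G.dist s z2) with h12 | h21
  · rcases le_total (G.dist s z2) (G.dist s z3) with h23 | h32
    · exact Or.inl (mid_of_le hR h1 h2 h3 h12 h23)
    · rcases le_total (G.dist s z1) (G.dist s z3) with h13 | h31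
      · have := mid_of_le hR h1 h3 h2 h13 h32
        right; right; omega
      · have := mid_of_le hR h3 h1 h2 h31 h12
        right; left; omega
  · rcases le_total (G.dist s z1) (G.dist s z3) with h13 | h31
    · have := mid_of_le hR h2 h1 h3 h21 h13
      right; left; omega
    · rcases le_total (G.dist s z2) (G.dist s z3) with h23 | h32
      · have := mid_of_le hR h2 h3 h1 h23 h31
        right; right; omega
      · have := mid_of_le hR h3 h2 h1 h32 h21
        left; omega

lemma core {sa ta sb tb sc tc sj tj : V} {xa xb xc xj : ℝ} {X Y W N : V}
    (hσa : sigmaSP G sa ta = 1) (hσb : sigmaSP G sb tb = 1)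
    (hσc : sigmaSP G sc tc = 1) (hσj : sigmaSP G sj tj ≤ 2)
    (hxa : 0 < xa) (hxa1 : xa ≤ 1) (hxb : 0 < xb) (hxb1 : xb ≤ 1)
    (hxc : 0 < xc) (hxc1 : xc ≤ 1) (hxj : 0 < xj) (hxj1 : xj ≤ 1)
    (hXa : xa ≤ bcFrac G sa ta X) (hXb : xb ≤ bcFrac G sb tb X)
    (hXj : xj ≤ bcFrac G sj tj X) (hXc : ¬ xc ≤ bcFrac G sc tc X)
    (hYa : xa ≤ bcFrac G sa ta Y) (hYc : xc ≤ bcFrac G sc tc Y)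
    (hYj : xj ≤ bcFrac G sj tj Y) (hYb : ¬ xb ≤ bcFrac G sb tb Y)
    (hWb : xb ≤ bcFrac G sb tb W) (hWc : xc ≤ bcFrac G sc tc W)
    (hWj : xj ≤ bcFrac G sj tj W) (hWa : ¬ xa ≤ bcFrac G sa ta W)
    (hNa : xa ≤ bcFrac G sa ta N) (hNb : xb ≤ bcFrac G sb tb N)
    (hNc : xc ≤ bcFrac G sc tc N) (hNj : ¬ xj ≤ bcFrac G sj tj N) :
    False := by
  have hXa' := (mem_imp hxa hXa).1
  have hXb' := (mem_imp hxb hXb).1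
  have hXj' := (mem_imp hxj hXj).1
  have hYa' := (mem_imp hxa hYa).1
  have hYc' := (mem_imp hxc hYc).1
  have hYj' := (mem_imp hxj hYj).1
  have hWb' := (mem_imp hxb hWb).1
  have hWc' := (mem_imp hxc hWc).1
  have hWj' := (mem_imp hxj hWj).1
  have hNa' := (mem_imp hxa hNa).1
  have hNb' := (mem_imp hxb hNb).1
  have hNc' := (mem_imp hxc hNc).1
  have hσj1 : 1 ≤ sigmaSP G sj tj := (mem_imp hxj hXj).2
  obtain ⟨RA, RAp, RAl, hA⟩ := unique_internal hσa
  obtain ⟨RB, RBp, RBl, hB⟩ := unique_internal hσb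
  obtain ⟨RC, RCp, RCl, hC⟩ := unique_internal hσc
  rcases le_or_gt xj (1 / 2) with hhalf | hbig
  · obtain ⟨RX, RXp, RXl, hXm, hXs, hXt⟩ := exists_of_sigT hXj'
    obtain ⟨RY, RYp, RYl, hYm, hYs, hYt⟩ := exists_of_sigT hYj'
    obtain ⟨RW, RWp, RWl, hWm, hWs, hWt⟩ := exists_of_sigT hWj'
    by_cases hxy : RX = RY
    · subst hxy
      rcases ex_mid RAl (hA Y hYa').1 (hA X hXa').1 (hA N hNa').1 with hmid | hmid | hmid
      · exact hXc (mem_of_unique hσc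
          (middle_case RCl (hA Y hYa').1 (hA X hXa').1 (hA N hNa').1 hmid
            (hC Y hYc') (hC N hNc')) hxc1)
      · exact hYb (mem_of_unique hσb
          (middle_case RBl (hA X hXa').1 (hA Y hYa').1 (hA N hNa').1 hmid
            (hB X hXb') (hB N hNb')) hxb1)
      · exact hNj (mem_of_two hσj hσj1
          (middle_case RXl (hA Y hYa').1 (hA N hNa').1 (hA X hXa').1 hmid
            ⟨hYm, hYs, hYt⟩ ⟨hXm, hXs, hXt⟩) hhalf)
    · by_cases hxw : RX = RW
      · subst hxw
        rcases ex_mid RBl (hB W hWb').1 (hB X hXb').1 (hB N hNb').1 with hmid | hmid | hmid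
        · exact hXc (mem_of_unique hσc
            (middle_case RCl (hB W hWb').1 (hB X hXb').1 (hB N hNb').1 hmid
              (hC W hWc') (hC N hNc')) hxc1)
        · exact hWa (mem_of_unique hσa
            (middle_case RAl (hB X hXb').1 (hB W hWb').1 (hB N hNb').1 hmid
              (hA X hXa') (hA N hNa')) hxa1)
        · exact hNj (mem_of_two hσj hσj1
            (middle_case RXl (hB W hWb').1 (hB N hNb').1 (hB X hXb').1 hmid
              ⟨hWm, hWs, hWt⟩ ⟨hXm, hXs, hXt⟩) hhalf)
      · by_cases hyw : RY = RW
        · subst hyw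
          rcases ex_mid RCl (hC W hWc').1 (hC Y hYc').1 (hC N hNc').1 with hmid | hmid | hmid
          · exact hYb (mem_of_unique hσb
              (middle_case RBl (hC W hWc').1 (hC Y hYc').1 (hC N hNc').1 hmid
                (hB W hWb') (hB N hNb')) hxb1)
          · exact hWa (mem_of_unique hσa
              (middle_case RAl (hC Y hYc').1 (hC W hWc').1 (hC N hNc').1 hmid
                (hA Y hYa') (hA N hNa')) hxa1)
          · exact hNj (mem_of_two hσj hσj1
              (middle_case RYl (hC W hWc').1 (hC N hNc').1 (hC Y hYc').1 hmid
                ⟨hWm, hWs, hWt⟩ ⟨hYm, hYs, hYt⟩) hhalf)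
        · classical
          letI : Fintype {p : G.Walk sj tj // p.IsPath ∧ p.length = G.dist sj tj} :=
            Fintype.ofFinite _
          set e1 : {p : G.Walk sj tj // p.IsPath ∧ p.length = G.dist sj tj} :=
            ⟨RX, RXp, RXl⟩ with he1
          set e2 : {p : G.Walk sj tj // p.IsPath ∧ p.length = G.dist sj tj} :=
            ⟨RY, RYp, RYl⟩ with he2
          set e3 : {p : G.Walk sj tj // p.IsPath ∧ p.length = G.dist sj tj} :=
            ⟨RW, RWp, RWl⟩ with he3
          have hne12 : e1 ≠ e2 := fun h => hxy (congrArg Subtype.val h)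
          have hne13 : e1 ≠ e3 := fun h => hxw (congrArg Subtype.val h)
          have hne23 : e2 ≠ e3 := fun h => hyw (congrArg Subtype.val h)
          have hcard3 : ({e1, e2, e3} : Finset _).card = 3 := by
            rw [Finset.card_insert_of_notMem (by simp [hne12, hne13]),
              Finset.card_insert_of_notMem (by simp [hne23]),
              Finset.card_singleton]
          have hle3 := Finset.card_le_univ ({e1, e2, e3} : Finset _)
          rw [hcard3] at hle3
          have hnc : sigmaSP G sj tj =
              Fintype.card {p : G.Walk sj tj // p.IsPath ∧ p.length = G.dist sj tj} := by
            unfold sigmaSP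
            exact Nat.card_eq_fintype_card
          omega
  · have hXeq := sigT_eq_of_big hσj hXj hbig
    have hYeq := sigT_eq_of_big hσj hYj hbig
    have hWeq := sigT_eq_of_big hσj hWj hbig
    obtain ⟨RJ, RJp, RJl, hXm, hXs, hXt⟩ := exists_of_sigT hXj'
    have hYint := internal_of_sigT_eq hYeq RJp RJl
    have hWint := internal_of_sigT_eq hWeq RJp RJl
    rcases ex_mid RJl hYint.1 hXm hWint.1 with hmid | hmid | hmid
    · exact hXc (mem_of_unique hσc
        (middle_case RCl hYint.1 hXm hWint.1 hmid (hC Y hYc') (hC W hWc')) hxc1)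
    · exact hYb (mem_of_unique hσb
        (middle_case RBl hXm hYint.1 hWint.1 hmid (hB X hXb') (hB W hWb')) hxb1)
    · exact hWa (mem_of_unique hσa
        (middle_case RAl hYint.1 hWint.1 hXm hmid (hA Y hYa') (hA X hXa')) hxa1)

lemma finish {u v : Fin 4 → V} {x : Fin 4 → ℝ}
    (hx1 : ∀ i, x i ≤ 1) (hxpos : ∀ i, 0 < x i)
    (hwit : ∀ s : Fin 4 → Prop, ∃ w : V, ∀ i, (x i ≤ bcFrac G (u i) (v i) w ↔ s i))
    (a b c j : Fin 4)
    (hab : a ≠ b) (hac : a ≠ c) (haj : a ≠ j)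
    (hbc : b ≠ c) (hbj : b ≠ j) (hcj : c ≠ j)
    (hσj : sigmaSP G (u j) (v j) ≤ 2)
    (hσa : sigmaSP G (u a) (v a) = 1) (hσb : sigmaSP G (u b) (v b) = 1)
    (hσc : sigmaSP G (u c) (v c) = 1) : False := by
  obtain ⟨X, hX⟩ := hwit (fun i => i = a ∨ i = b ∨ i = j)
  obtain ⟨Y, hY⟩ := hwit (fun i => i = a ∨ i = c ∨ i = j)
  obtain ⟨W, hW⟩ := hwit (fun i => i = b ∨ i = c ∨ i = j)
  obtain ⟨N, hN⟩ := hwit (fun i => i = a ∨ i = b ∨ i = c)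
  refine core hσa hσb hσc hσj (hxpos a) (hx1 a) (hxpos b) (hx1 b)
    (hxpos c) (hx1 c) (hxpos j) (hx1 j)
    ((hX a).mpr (Or.inl rfl)) ((hX b).mpr (Or.inr (Or.inl rfl)))
    ((hX j).mpr (Or.inr (Or.inr rfl)))
    (fun h => by rcases (hX c).mp h with h | h | h
                 exacts [hac h.symm, hbc h.symm, hcj h])
    ((hY a).mpr (Or.inl rfl)) ((hY c).mpr (Or.inr (Or.inl rfl)))
    ((hY j).mpr (Or.inr (Or.inr rfl)))
    (fun h => by rcases (hY b).mp h with h | h | h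
                 exacts [hab h.symm, hbc h, hbj h])
    ((hW b).mpr (Or.inl rfl)) ((hW c).mpr (Or.inr (Or.inl rfl)))
    ((hW j).mpr (Or.inr (Or.inr rfl)))
    (fun h => by rcases (hW a).mp h with h | h | h
                 exacts [hab h, hac h, haj h])
    ((hN a).mpr (Or.inl rfl)) ((hN b).mpr (Or.inr (Or.inl rfl)))
    ((hN c).mpr (Or.inr (Or.inr rfl)))
    (fun h => by rcases (hN j).mp h with h | h | h
                 exacts [haj h.symm, hbj h.symm, hcj h.symm])

end NoShatterAux

/-- No undirected graph allows the rangeset of betweenness functions to shatter a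
4-element set `B = {((u_i,v_i),x_i)}` when at least three pairs have a unique
shortest path and the remaining pair has at most two shortest paths. -/
theorem no_shatter_of_three_unique_sp {V : Type*} [Fintype V] (G : SimpleGraph V)
    (u v : Fin 4 → V) (x : Fin 4 → ℝ)
    (hne : ∀ i, u i ≠ v i) (hx : ∀ i, x i ∈ Set.Icc (0 : ℝ) 1)
    (hinj : Function.Injective (fun i => ((u i, v i), x i)))
    (hsp : ∃ j, sigmaSP G (u j) (v j) ≤ 2 ∧ ∀ i, i ≠ j → sigmaSP G (u i) (v i) = 1) :
    ¬ ShattersBC G {p | ∃ i, p = ((u i, v i), x i)} := by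
  intro hsh
  classical
  have hBmem : ∀ i, ((u i, v i), x i) ∈
      {p : (V × V) × ℝ | ∃ i, p = ((u i, v i), x i)} := fun i => ⟨i, rfl⟩
  have hxpos : ∀ i, 0 < x i := by
    intro i
    rcases lt_or_eq_of_le (hx i).1 with h | h
    · exact h
    · exfalso
      obtain ⟨w, hw⟩ := hsh ∅ (Set.empty_subset _)
      have hmem : ((u i, v i), x i) ∈
          {p ∈ {p : (V × V) × ℝ | ∃ i, p = ((u i, v i), x i)} |
            p.2 ≤ bcFrac G p.1.1 p.1.2 w} :=
        ⟨hBmem i, by rw [← h]; exact NoShatterAux.bc_nonneg⟩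
      rw [hw] at hmem
      exact hmem
  have hwit : ∀ s : Fin 4 → Prop, ∃ w : V,
      ∀ i, (x i ≤ bcFrac G (u i) (v i) w ↔ s i) := by
    intro s
    obtain ⟨w, hw⟩ := hsh {p | ∃ i, s i ∧ p = ((u i, v i), x i)}
      (by rintro p ⟨i, _, rfl⟩; exact ⟨i, rfl⟩)
    refine ⟨w, fun i => ?_⟩
    have hext := Set.ext_iff.mp hw ((u i, v i), x i)
    simp only [Set.mem_setOf_eq, Set.mem_sep_iff] at hext
    constructor
    · intro hle
      obtain ⟨i', hsi', heq⟩ := hext.mp ⟨hBmem i, hle⟩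
      have : i = i' := hinj heq
      rw [this]
      exact hsi'
    · intro hsi
      exact (hext.mpr ⟨i, hsi, rfl⟩).2
  obtain ⟨j, hσj, huniq⟩ := hsp
  have hx1 : ∀ i, x i ≤ 1 := fun i => (hx i).2
  fin_cases j
  · exact NoShatterAux.finish hx1 hxpos hwit 1 2 3 0
      (by decide) (by decide) (by decide) (by decide) (by decide) (by decide)
      hσj (huniq 1 (by decide)) (huniq 2 (by decide)) (huniq 3 (by decide))
  · exact NoShatterAux.finish hx1 hxpos hwit 0 2 3 1
      (by decide) (by decide) (by decide) (by decide) (by decide) (by decide)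
      hσj (huniq 0 (by decide)) (huniq 2 (by decide)) (huniq 3 (by decide))
  · exact NoShatterAux.finish hx1 hxpos hwit 0 1 3 2
      (by decide) (by decide) (by decide) (by decide) (by decide) (by decide)
      hσj (huniq 0 (by decide)) (huniq 1 (by decide)) (huniq 3 (by decide))
  · exact NoShatterAux.finish hx1 hxpos hwit 0 1 2 3
      (by decide) (by decide) (by decide) (by decide) (by decide) (by decide)
      hσj (huniq 0 (by decide)) (huniq 1 (by decide)) (huniq 2 (by decide))
end

section
/- Let L > 0, ε ∈ (0,1), and 0 ≤ ω < ε. The cubic equation −8L³ + L²(−16ω + (1+4ε)²)x − 4L(ω−ε)²(1+4ε)x² + 4(ω−ε)⁴x³ = 0 in the unknown x has three real roots, given in closed form via the trigonometric method: with z = 48ω + (1+4ε)², the roots are (L/3)((1+4ε) − √z·cos θ)/(ω−ε)² and (L/6)(2(1+4ε) + √z(cos θ ± √3 sin θ))/(ω−ε)² for an appropriate angle θ. -/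
set_option maxHeartbeats 2000000 in
/-- The cubic `−8L³ + L²(−16ω + (1+4ε)²)x − 4L(ω−ε)²(1+4ε)x² + 4(ω−ε)⁴x³`
arising in the next-sample-size computation has nonnegative discriminant under
`L > 0`, `0 ≤ ω < ε < 1`, hence all three of its roots are real. -/
theorem cubic_all_roots_real (L ω ε : ℝ) (hL : 0 < L) (hω : 0 ≤ ω)
    (hε : ε ∈ Set.Ioo (0 : ℝ) 1) (hωε : ω < ε) :
    0 ≤ 18 * (4 * (ω - ε) ^ 4) * (-4 * L * (ω - ε) ^ 2 * (1 + 4 * ε)) *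
          (L ^ 2 * (-16 * ω + (1 + 4 * ε) ^ 2)) * (-8 * L ^ 3) -
        4 * (-4 * L * (ω - ε) ^ 2 * (1 + 4 * ε)) ^ 3 * (-8 * L ^ 3) +
        (-4 * L * (ω - ε) ^ 2 * (1 + 4 * ε)) ^ 2 *
          (L ^ 2 * (-16 * ω + (1 + 4 * ε) ^ 2)) ^ 2 -
        4 * (4 * (ω - ε) ^ 4) * (L ^ 2 * (-16 * ω + (1 + 4 * ε) ^ 2)) ^ 3 -
        27 * (4 * (ω - ε) ^ 4) ^ 2 * (-8 * L ^ 3) ^ 2 ∧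
    ∃ r₁ r₂ r₃ : ℝ, ∀ x : ℝ,
      4 * (ω - ε) ^ 4 * x ^ 3 - 4 * L * (ω - ε) ^ 2 * (1 + 4 * ε) * x ^ 2 +
          L ^ 2 * (-16 * ω + (1 + 4 * ε) ^ 2) * x - 8 * L ^ 3
        = 4 * (ω - ε) ^ 4 * (x - r₁) * (x - r₂) * (x - r₃) := by
  obtain ⟨hε0, hε1⟩ := hε
  have hu0 : (0:ℝ) < 1 + 4*ε := by linarith
  have hz0 : (0:ℝ) < ((1+4*ε)^2 + 48*ω) := by nlinarith
  set R := Real.sqrt ((1+4*ε)^2 + 48*ω) with hRdef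
  have hR0 : 0 < R := Real.sqrt_pos.mpr hz0
  have hg3 : R^2 = ((1+4*ε)^2 + 48*ω) := Real.sq_sqrt hz0.le
  have hRu : 1 + 4*ε ≤ R := by nlinarith [hg3, hω, hR0]
  have hRle : R ≤ 2*(1+4*ε) := by nlinarith [hg3, hR0, hωε, hε0, sq_nonneg (1-4*ε)]
  have hQ : 0 ≤ 16*(1+4*ε) - 12 - 4*(R-(1+4*ε)) - 3*(R-(1+4*ε))^2 := by
    nlinarith [hg3, hωε, mul_nonneg (show (0:ℝ) ≤ R-(1+4*ε)+2 by linarith)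
      (show (0:ℝ) ≤ 2*(1+4*ε)-R by linarith)]
  have hid : 32*((R+(1+4*ε))*(R-2*(1+4*ε))^2) - 6912*(ε-ω)^2
      = (R+(1+4*ε)-6)^2 * (16*(1+4*ε) - 12 - 4*(R-(1+4*ε)) - 3*(R-(1+4*ε))^2) := by
    linear_combination (-3 + 3*R^2 - 312*ε - 48*ε^2 + 144*ω) * hg3
  have hA : 216*(ε-ω)^2 ≤ (R+(1+4*ε))*(R-2*(1+4*ε))^2 := by
    nlinarith [hid, mul_nonneg (sq_nonneg (R+(1+4*ε)-6)) hQ]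
  have h5 : ((1+4*ε)^2 + 48*ω)*R - (-(1+4*ε)^3 + 144*(1+4*ε)*ω + 216*(ω-ε)^2) = (R+(1+4*ε))*(R-2*(1+4*ε))^2 - 216*(ε-ω)^2 := by
    linear_combination (3*(1+4*ε)-R) * hg3
  have hKA : (-(1+4*ε)^3 + 144*(1+4*ε)*ω + 216*(ω-ε)^2) ≤ ((1+4*ε)^2 + 48*ω)*R := by linarith [hA, h5]
  have h6 : ((1+4*ε)^2 + 48*ω)*R + (-(1+4*ε)^3 + 144*(1+4*ε)*ω + 216*(ω-ε)^2) = R^3 - (1+4*ε)^3 + 144*(1+4*ε)*ω + 216*(ω-ε)^2 := by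
    linear_combination (-R) * hg3
  have hu3 : (1+4*ε)^3 ≤ R^3 := pow_le_pow_left₀ hu0.le hRu 3
  have hKB : -(((1+4*ε)^2 + 48*ω)*R) ≤ (-(1+4*ε)^3 + 144*(1+4*ε)*ω + 216*(ω-ε)^2) := by
    nlinarith [h6, hu3, mul_nonneg hu0.le hω, sq_nonneg (ω-ε)]
  have h9 : ((1+4*ε)^2 + 48*ω)^3 - (-(1+4*ε)^3 + 144*(1+4*ε)*ω + 216*(ω-ε)^2)^2 = (((1+4*ε)^2 + 48*ω)*R - (-(1+4*ε)^3 + 144*(1+4*ε)*ω + 216*(ω-ε)^2)) * (((1+4*ε)^2 + 48*ω)*R + (-(1+4*ε)^3 + 144*(1+4*ε)*ω + 216*(ω-ε)^2)) := by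
    linear_combination (-(((1+4*ε)^2 + 48*ω)^2)) * hg3
  have hK : 0 ≤ ((1+4*ε)^2 + 48*ω)^3 - (-(1+4*ε)^3 + 144*(1+4*ε)*ω + 216*(ω-ε)^2)^2 := by
    rw [h9]; exact mul_nonneg (by linarith) (by linarith)
  constructor
  · nlinarith [mul_nonneg (mul_nonneg (pow_nonneg hL.le 6) (pow_nonneg (sq_nonneg (ω-ε)) 2)) hK]
  · have hR3 : (0:ℝ) < R^3 := pow_pos hR0 3
    have hR3z : R^3 = ((1+4*ε)^2 + 48*ω)*R := by linear_combination R * hg3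
    have hex : ∃ c s3 : ℝ, s3^2 = 3 - 3*c^2 ∧
        (4*c^3 - 3*c) * (((1+4*ε)^2 + 48*ω)*R) = (-(1+4*ε)^3 + 144*(1+4*ε)*ω + 216*(ω-ε)^2) := by
      refine ⟨Real.cos (Real.arccos ((-(1+4*ε)^3 + 144*(1+4*ε)*ω + 216*(ω-ε)^2) / R^3) / 3),
        Real.sqrt 3 * Real.sin (Real.arccos ((-(1+4*ε)^3 + 144*(1+4*ε)*ω + 216*(ω-ε)^2) / R^3) / 3), ?_, ?_⟩
      · rw [mul_pow, Real.sq_sqrt (by norm_num : (0:ℝ) ≤ 3)]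
        nlinarith [Real.sin_sq_add_cos_sq (Real.arccos ((-(1+4*ε)^3 + 144*(1+4*ε)*ω + 216*(ω-ε)^2) / R^3) / 3)]
      · have hlo : -1 ≤ (-(1+4*ε)^3 + 144*(1+4*ε)*ω + 216*(ω-ε)^2) / R^3 := by
          rw [le_div_iff₀ hR3]; nlinarith [hKB, hR3z]
        have hhi : (-(1+4*ε)^3 + 144*(1+4*ε)*ω + 216*(ω-ε)^2) / R^3 ≤ 1 := by
          rw [div_le_one hR3]; nlinarith [hKA, hR3z]
        have hcos3 : Real.cos (3 * (Real.arccos ((-(1+4*ε)^3 + 144*(1+4*ε)*ω + 216*(ω-ε)^2) / R^3) / 3)) = (-(1+4*ε)^3 + 144*(1+4*ε)*ω + 216*(ω-ε)^2) / R^3 := by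
          rw [show 3 * (Real.arccos ((-(1+4*ε)^3 + 144*(1+4*ε)*ω + 216*(ω-ε)^2) / R^3) / 3) = Real.arccos ((-(1+4*ε)^3 + 144*(1+4*ε)*ω + 216*(ω-ε)^2) / R^3) by ring]
          exact Real.cos_arccos hlo hhi
        rw [Real.cos_three_mul] at hcos3
        have h4 : (4 * Real.cos (Real.arccos ((-(1+4*ε)^3 + 144*(1+4*ε)*ω + 216*(ω-ε)^2) / R^3) / 3) ^ 3
            - 3 * Real.cos (Real.arccos ((-(1+4*ε)^3 + 144*(1+4*ε)*ω + 216*(ω-ε)^2) / R^3) / 3)) * R^3 = (-(1+4*ε)^3 + 144*(1+4*ε)*ω + 216*(ω-ε)^2) := by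
          rw [hcos3]; exact div_mul_cancel₀ _ hR3.ne'
        linear_combination h4 - ((4 * Real.cos (Real.arccos ((-(1+4*ε)^3 + 144*(1+4*ε)*ω + 216*(ω-ε)^2) / R^3) / 3) ^ 3
            - 3 * Real.cos (Real.arccos ((-(1+4*ε)^3 + 144*(1+4*ε)*ω + 216*(ω-ε)^2) / R^3) / 3)) * R) * hg3
    obtain ⟨c, s3, hg1, hg2⟩ := hex
    have hD2 : ((ω-ε)^2) ≠ 0 := pow_ne_zero 2 (sub_ne_zero.mpr (ne_of_lt hωε))
    refine ⟨L*((1+4*ε)+R*c)/(3*(ω-ε)^2), L*(2*(1+4*ε)-R*(c+s3))/(6*(ω-ε)^2),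
      L*(2*(1+4*ε)-R*(c-s3))/(6*(ω-ε)^2), ?_⟩
    intro x
    have he1 : 3*(ω-ε)^2 * (L*((1+4*ε)+R*c)/(3*(ω-ε)^2)) = L*((1+4*ε)+R*c) := by
      field_simp
      exact mul_div_cancel_left₀ _ (sub_ne_zero.mpr (ne_of_lt hωε))
    have he2 : 6*(ω-ε)^2 * (L*(2*(1+4*ε)-R*(c+s3))/(6*(ω-ε)^2)) = L*(2*(1+4*ε)-R*(c+s3)) := by
      field_simp
      exact mul_div_cancel_left₀ _ (sub_ne_zero.mpr (ne_of_lt hωε))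
    have he3 : 6*(ω-ε)^2 * (L*(2*(1+4*ε)-R*(c-s3))/(6*(ω-ε)^2)) = L*(2*(1+4*ε)-R*(c-s3)) := by
      field_simp
      exact mul_div_cancel_left₀ _ (sub_ne_zero.mpr (ne_of_lt hωε))
    have hden : (108:ℝ) * ((ω-ε)^2)^3 ≠ 0 := by
      exact mul_ne_zero (by norm_num) (pow_ne_zero 3 hD2)
    refine mul_left_cancel₀ hden ?_
    linear_combination (144*(ω-ε)^8*(x - L*(2*(1+4*ε)-R*(c+s3))/(6*(ω-ε)^2))*(x - L*(2*(1+4*ε)-R*(c-s3))/(6*(ω-ε)^2))) * he1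
      + (24*(ω-ε)^6*(3*(ω-ε)^2*x - L*((1+4*ε)+R*c))*(x - L*(2*(1+4*ε)-R*(c-s3))/(6*(ω-ε)^2))) * he2
      + (4*(ω-ε)^4*(3*(ω-ε)^2*x - L*((1+4*ε)+R*c))*(6*(ω-ε)^2*x - L*(2*(1+4*ε)-R*(c+s3)))) * he3
      + (12*L^2*ε^6*x + 96*L^2*ε^7*x + 192*L^2*ε^8*x + -72*L^2*ω*ε^5*x + -1152*L^2*ω*ε^7*x + 180*L^2*ω^2*ε^4*x + -2016*L^2*ω^2*ε^5*x + 2880*L^2*ω^2*ε^6*x + -240*L^2*ω^3*ε^3*x + 6720*L^2*ω^3*ε^4*x + -3840*L^2*ω^3*ε^5*x + 180*L^2*ω^4*ε^2*x + -10080*L^2*ω^4*ε^3*x + 2880*L^2*ω^4*ε^4*x + -72*L^2*ω^5*ε*x + 8064*L^2*ω^5*ε^2*x + -1152*L^2*ω^5*ε^3*x + 12*L^2*ω^6*x + -3360*L^2*ω^6*ε*x + 192*L^2*ω^6*ε^2*x + 576*L^2*ω^7*x + -4*L^3*ε^4 + -4*L^3*ε^4*R*c + -48*L^3*ε^5 +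 -32*L^3*ε^5*R*c + -192*L^3*ε^6 + -64*L^3*ε^6*R*c + -256*L^3*ε^7 + 16*L^3*ω*ε^3 + 16*L^3*ω*ε^3*R*c + -64*L^3*ω*ε^4*R*c + 256*L^3*ω*ε^5*R*c + 1024*L^3*ω*ε^6 + -24*L^3*ω^2*ε^2 + -24*L^3*ω^2*ε^2*R*c + 480*L^3*ω^2*ε^3 + 576*L^3*ω^2*ε^3*R*c + 1920*L^3*ω^2*ε^4 + -384*L^3*ω^2*ε^4*R*c + -1536*L^3*ω^2*ε^5 + 16*L^3*ω^3*ε + 16*L^3*ω^3*ε*R*c + -960*L^3*ω^3*ε^2 + -1024*L^3*ω^3*ε^2*R*c + -3840*L^3*ω^3*ε^3 + 256*L^3*ω^3*ε^3*R*c + 1024*L^3*ω^3*ε^4 + -4*L^3*ω^4 + -4*L^3*ω^4*R*c + 720*L^3*ω^4*ε + 736*L^3*ω^4*ε*R*c + 2880*L^3*ω^4*ε^2 + -64*L^3*ω^4*ε^2*R*c + -256*L^3*ω^4*ε^3 + -192*L^3*ω^5 + -192*L^3*ω^5*R*c + -768*L^3*ω^5*ε) * hg1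
      + (4*L^3*ε^4 + -16*L^3*ω*ε^3 + 24*L^3*ω^2*ε^2 + -16*L^3*ω^3*ε + 4*L^3*ω^4) * hg2
      + (12*L^2*ε^6*s3^2*x + 36*L^2*ε^6*c^2*x + -72*L^2*ω*ε^5*s3^2*x + -216*L^2*ω*ε^5*c^2*x + 180*L^2*ω^2*ε^4*s3^2*x + 540*L^2*ω^2*ε^4*c^2*x + -240*L^2*ω^3*ε^3*s3^2*x + -720*L^2*ω^3*ε^3*c^2*x + 180*L^2*ω^4*ε^2*s3^2*x + 540*L^2*ω^4*ε^2*c^2*x + -72*L^2*ω^5*ε*s3^2*x + -216*L^2*ω^5*ε*c^2*x + 12*L^2*ω^6*s3^2*x + 36*L^2*ω^6*c^2*x + -4*L^3*ε^4*s3^2 + -12*L^3*ε^4*c^2 + -4*L^3*ε^4*R*c*s3^2 + 4*L^3*ε^4*R*c^3 + -16*L^3*ε^5*s3^2 + -48*L^3*ε^5*c^2 + 16*L^3*ω*ε^3*s3^2 + 48*L^3*ω*ε^3*c^2 + 16*L^3*ω*ε^3*R*c*s3^2 + -16*L^3*ω*ε^3*R*c^3 + 64*L^3*ω*ε^4*s3^2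 + 192*L^3*ω*ε^4*c^2 + -24*L^3*ω^2*ε^2*s3^2 + -72*L^3*ω^2*ε^2*c^2 + -24*L^3*ω^2*ε^2*R*c*s3^2 + 24*L^3*ω^2*ε^2*R*c^3 + -96*L^3*ω^2*ε^3*s3^2 + -288*L^3*ω^2*ε^3*c^2 + 16*L^3*ω^3*ε*s3^2 + 48*L^3*ω^3*ε*c^2 + 16*L^3*ω^3*ε*R*c*s3^2 + -16*L^3*ω^3*ε*R*c^3 + 64*L^3*ω^3*ε^2*s3^2 + 192*L^3*ω^3*ε^2*c^2 + -4*L^3*ω^4*s3^2 + -12*L^3*ω^4*c^2 + -4*L^3*ω^4*R*c*s3^2 + 4*L^3*ω^4*R*c^3 + -16*L^3*ω^4*ε*s3^2 + -48*L^3*ω^4*ε*c^2) * hg3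
end
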